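/- arXiv:math/0703670 — 3 statements merged into one kernel-verified Lean document; each statement's English description precedes it below -/
import Mathlib

section
/- Let T₀ be an ergodic measure-preserving transformation of a probability space with transfer operator T̂₀ (the adjoint of composition by T₀ on L²). Let g be a nonzero integrable function, f a measurable function with |f| ≤ 1 almost everywhere, and λ ∈ ℂ with |λ| ≥ 1, such that λg = T̂₀(fg) almost everywhere. Then |λ| = 1, |f| = 1 almost everywhere, and λ·(g ∘ T₀) = f·g almost everywhere. -/
open MeasureTheory

private lemma sgn_abs_le (z : ℂ) :
    ‖(starRingEnd ℂ) z / (‖z‖ : ℂ)‖ ≤ 1 := by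
  rw [norm_div, Complex.norm_conj, Complex.norm_real, Real.norm_of_nonneg (norm_nonneg z)]
  exact div_self_le_one _

private lemma sgn_mul (z : ℂ) :
    z * ((starRingEnd ℂ) z / (‖z‖ : ℂ)) = (‖z‖ : ℂ) := by
  by_cases hz : z = 0
  · simp [hz]
  · have haw : (‖z‖ : ℂ) ≠ 0 := Complex.ofReal_ne_zero.mpr (norm_pos_iff.mpr hz).ne'
    rw [mul_div_assoc', div_eq_iff haw, Complex.mul_conj, Complex.normSq_eq_norm_sq]
    push_cast; ring

private lemma eq_ofReal_of_re {z : ℂ} {r : ℝ} (h1 : z.re = r) (h2 : ‖z‖ ≤ r) : z = r := by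
  have hre : ‖z‖ = z.re := le_antisymm (h1 ▸ h2) (Complex.re_le_norm z)
  have hsq := Complex.sq_norm z
  rw [hre, Complex.normSq_apply] at hsq
  have him : z.im = 0 := by nlinarith [sq_nonneg z.im]
  apply Complex.ext <;> simp [h1, him]

private lemma solve_sgn {a w : ℂ} {r : ℝ} (hw : w ≠ 0)
    (h : a * ((starRingEnd ℂ) w / (‖w‖ : ℂ)) = (r : ℂ)) :
    a = (r : ℂ) * w / (‖w‖ : ℂ) := by
  have haw : (‖w‖ : ℂ) ≠ 0 := Complex.ofReal_ne_zero.mpr (norm_pos_iff.mpr hw).ne'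
  have hmc : (starRingEnd ℂ) w * w = ((‖w‖ : ℂ)) ^ 2 := by
    rw [mul_comm, Complex.mul_conj, Complex.normSq_eq_norm_sq]; push_cast; ring
  have h' : a * (starRingEnd ℂ) w = (r : ℂ) * (‖w‖ : ℂ) := by
    field_simp at h; linear_combination h
  rw [eq_div_iff haw]
  exact mul_right_cancel₀ haw (by linear_combination w * h' - a * hmc)

private lemma sgn_cancel {w : ℂ} (hw : w ≠ 0) (c d : ℂ) :
    c * (d * w) / (‖w‖ : ℂ) * ((starRingEnd ℂ) w / (‖w‖ : ℂ)) = d * c := by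
  have haw : (‖w‖ : ℂ) ≠ 0 := Complex.ofReal_ne_zero.mpr (norm_pos_iff.mpr hw).ne'
  have hmc : (starRingEnd ℂ) w * w = ((‖w‖ : ℂ)) ^ 2 := by
    rw [mul_comm, Complex.mul_conj, Complex.normSq_eq_norm_sq]; push_cast; ring
  field_simp
  linear_combination c * d * hmc

/-- Lemma on eigenfunctions of transfer operators: if `T₀` is ergodic measure preserving,
`g` is a nonzero integrable function, `|f| ≤ 1`, `|λ| ≥ 1` and `λ g = T̂₀(f g)`
(where the transfer operator is characterized by `∫ T̂₀ u · v = ∫ u · (v ∘ T₀)` for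
bounded measurable `v`), then `|λ| = 1`, `|f| = 1` a.e., and `λ · (g ∘ T₀) = f g` a.e. -/
theorem stmt_0 {α : Type*} [MeasurableSpace α] (μ : Measure α) [IsProbabilityMeasure μ]
    (T₀ : α → α) (hT : MeasurePreserving T₀ μ μ) (hErg : Ergodic T₀ μ)
    (g f h : α → ℂ) (hg : Integrable g μ) (hgne : ¬ g =ᵐ[μ] 0)
    (hfm : AEMeasurable f μ) (hfb : ∀ᵐ x ∂μ, ‖f x‖ ≤ 1)
    (hh : Integrable h μ)
    (hadj : ∀ v : α → ℂ, Measurable v → (∀ x, ‖v x‖ ≤ 1) →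
      ∫ x, h x * v x ∂μ = ∫ x, f x * g x * v (T₀ x) ∂μ)
    (lam : ℂ) (hlam : 1 ≤ ‖lam‖)
    (heq : ∀ᵐ x ∂μ, lam * g x = h x) :
    ‖lam‖ = 1 ∧ (∀ᵐ x ∂μ, ‖f x‖ = 1) ∧
      (∀ᵐ x ∂μ, lam * g (T₀ x) = f x * g x) := by
  classical
  have hTm : Measurable T₀ := hT.measurable
  have hgae : AEMeasurable g μ := hg.aemeasurable
  have hhae : AEMeasurable h μ := hh.aemeasurable
  set g' := hgae.mk g with hg'def
  have hg'm : Measurable g' := hgae.measurable_mk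
  have hgg' : g =ᵐ[μ] g' := hgae.ae_eq_mk
  set h' := hhae.mk h with hh'def
  have hh'm : Measurable h' := hhae.measurable_mk
  have hhh' : h =ᵐ[μ] h' := hhae.ae_eq_mk
  set φ : α → ℝ := fun x => ‖g x‖ with hφdef
  have hφnn : ∀ x, 0 ≤ φ x := fun x => norm_nonneg _
  have hφint : Integrable φ μ := by
    simpa [hφdef] using hg.norm
  have hφpos : 0 < ∫ x, φ x ∂μ := by
    rcases (integral_nonneg (f := φ) hφnn).lt_or_eq with hlt | heq0
    · exact hlt
    · exfalso; apply hgne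
      have h0 := (integral_eq_zero_iff_of_nonneg_ae
        (Filter.Eventually.of_forall hφnn) hφint).mp heq0.symm
      filter_upwards [h0] with x hx
      simpa using norm_eq_zero.mp hx
  -- the sign function of h'
  set v : α → ℂ := fun y => (starRingEnd ℂ) (h' y) / (‖h' y‖ : ℂ) with hvdef
  have hvm : Measurable v := by
    apply Measurable.div
    · exact Complex.continuous_conj.measurable.comp hh'm
    · exact Complex.measurable_ofReal.comp (continuous_norm.measurable.comp hh'm)
  have hv1 : ∀ y, ‖v y‖ ≤ 1 := fun y => sgn_abs_le _
  -- ∫ h v = ∫ |h|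
  have key0 : ∀ᵐ x ∂μ, h x * v x = (‖h x‖ : ℂ) := by
    filter_upwards [hhh'] with x hx
    rw [hvdef]; simp only; rw [hx, sgn_mul]
  have hint_hv : ∫ x, h x * v x ∂μ = ((∫ x, ‖h x‖ ∂μ : ℝ) : ℂ) := by
    rw [integral_congr_ae key0]; exact integral_ofReal
  have habs_h : ∫ x, ‖h x‖ ∂μ = ‖lam‖ * ∫ x, φ x ∂μ := by
    rw [← integral_const_mul]
    apply integral_congr_ae
    filter_upwards [heq] with x hx
    rw [← hx, norm_mul]
  set F : α → ℂ := fun x => f x * g x * v (T₀ x) with hFdef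
  have habsF : ∀ᵐ x ∂μ, ‖F x‖ ≤ φ x := by
    filter_upwards [hfb] with x hx
    rw [hFdef]; simp only [norm_mul]
    calc ‖f x‖ * ‖g x‖ * ‖v (T₀ x)‖
        ≤ 1 * ‖g x‖ * 1 := by
          gcongr <;> first | exact hx | exact hv1 _
      _ = φ x := by rw [hφdef, one_mul, mul_one]
  have hFm : AEStronglyMeasurable F μ :=
    ((hfm.mul hgae).mul ((hvm.comp hTm).aemeasurable)).aestronglyMeasurable
  have hFint : Integrable F μ := by
    apply hφint.mono' hFm
    filter_upwards [habsF] with x hx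
    simpa using hx
  have hFreint : Integrable (fun x => (F x).re) μ := by
    have := Integrable.re hFint; simpa [RCLike.re_to_complex] using this
  have hadj1 := hadj v hvm hv1
  have hre : ∫ x, ‖h x‖ ∂μ = ∫ x, (F x).re ∂μ := by
    have h1 : ((∫ x, ‖h x‖ ∂μ : ℝ) : ℂ) = ∫ x, F x ∂μ := by
      rw [← hint_hv, hadj1]
    have h2 := congrArg Complex.re h1
    rw [Complex.ofReal_re] at h2
    rw [h2]
    have := integral_re (𝕜 := ℂ) hFint
    simpa [RCLike.re_to_complex] using this.symm
  have hre_le : ∫ x, (F x).re ∂μ ≤ ∫ x, φ x ∂μ := by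
    apply integral_mono_ae hFreint hφint
    filter_upwards [habsF] with x hx
    exact (Complex.re_le_norm _).trans hx
  have hlam1 : ‖lam‖ = 1 := by
    have hle : ‖lam‖ * ∫ x, φ x ∂μ ≤ ∫ x, φ x ∂μ := by
      rw [← habs_h, hre]; exact hre_le
    nlinarith
  -- equality case
  have hFre_eq : ∀ᵐ x ∂μ, (F x).re = φ x := by
    have hzero : ∫ x, (φ x - (F x).re) ∂μ = 0 := by
      rw [integral_sub hφint hFreint, ← hre, habs_h, hlam1]; ring
    have hnn : 0 ≤ᵐ[μ] fun x => φ x - (F x).re := by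
      filter_upwards [habsF] with x hx
      have := (Complex.re_le_norm (F x)).trans hx
      simpa using this
    have := (integral_eq_zero_iff_of_nonneg_ae hnn (hφint.sub hFreint)).mp hzero
    filter_upwards [this] with x hx
    have : φ x - (F x).re = 0 := hx
    linarith
  have hE1 : ∀ᵐ x ∂μ, F x = ((φ x : ℝ) : ℂ) := by
    filter_upwards [hFre_eq, habsF] with x h1 h2
    exact eq_ofReal_of_re h1 h2
  have hlamne : lam ≠ 0 := fun h0 => by simp [h0] at hlam1
  have hlg : (fun y => lam * g y) =ᵐ[μ] h' := Filter.EventuallyEq.trans heq hhh'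
  have hcomp1 : ∀ᵐ x ∂μ, lam * g (T₀ x) = h' (T₀ x) := by
    have := hT.quasiMeasurePreserving.ae_eq_comp hlg
    filter_upwards [this] with x hx
    simpa [Function.comp] using hx
  have hg'T : ∀ᵐ x ∂μ, g' (T₀ x) = g (T₀ x) := by
    have := hT.quasiMeasurePreserving.ae_eq_comp hgg'.symm
    filter_upwards [this] with x hx
    simpa [Function.comp] using hx
  have hmain : ∀ᵐ x ∂μ, (g x ≠ 0 → ‖f x‖ = 1 ∧ g (T₀ x) ≠ 0) ∧
      f x * g x = ((‖g x‖ : ℝ) : ℂ) * (lam * g (T₀ x)) /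
        ((‖g (T₀ x)‖ : ℝ) : ℂ) := by
    filter_upwards [hE1, hcomp1, hfb] with x hE hcT hfx
    simp only [hFdef] at hE
    by_cases hgx : g x = 0
    · refine ⟨fun hc => absurd hgx hc, ?_⟩
      simp [hgx]
    · have hφx : (0:ℝ) < φ x := norm_pos_iff.mpr hgx
      have hvT : v (T₀ x) = (starRingEnd ℂ) (h' (T₀ x)) / (‖h' (T₀ x)‖ : ℂ) := rfl
      have hwne : h' (T₀ x) ≠ 0 := by
        intro h0
        rw [hvT, h0] at hE
        simp at hE
        exact hφx.ne' (by exact_mod_cast hE.symm)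
      have hgTne : g (T₀ x) ≠ 0 := by
        intro h0; apply hwne; rw [← hcT, h0, mul_zero]
      have habsE := congrArg Norm.norm hE
      rw [norm_mul, norm_mul, Complex.norm_real, Real.norm_of_nonneg (hφnn x)] at habsE
      have hbb : ‖g x‖ = φ x := rfl
      have hac : ‖f x‖ * ‖v (T₀ x)‖ = 1 :=
        mul_right_cancel₀ (ne_of_gt hφx) (by rw [one_mul]; rw [hbb] at habsE; linear_combination habsE)
      have hvT1 : ‖v (T₀ x)‖ ≤ 1 := hv1 _
      have hf1 : ‖f x‖ = 1 :=
        le_antisymm hfx (by nlinarith [norm_nonneg (f x)])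
      rw [hvT, ← hcT] at hE
      have hw : lam * g (T₀ x) ≠ 0 := mul_ne_zero hlamne hgTne
      have hsol := solve_sgn hw hE
      rw [norm_mul, hlam1, one_mul] at hsol
      exact ⟨fun _ => ⟨hf1, hgTne⟩, hsol⟩
  -- Step 3 : the measure φ ∂μ is T₀-invariant
  have hinv : ∀ A : Set α, MeasurableSet A →
      ∫ x in T₀ ⁻¹' A, φ x ∂μ = ∫ x in A, φ x ∂μ := by
    intro A hA
    set vA : α → ℂ := fun y => Set.indicator A (fun _ => (1:ℂ)) y *
      ((starRingEnd ℂ) (g' y) / (‖g' y‖ : ℂ)) with hvAdef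
    have hvAm : Measurable vA := by
      apply Measurable.mul
      · exact measurable_const.indicator hA
      · exact (Complex.continuous_conj.measurable.comp hg'm).div
          (Complex.measurable_ofReal.comp (continuous_norm.measurable.comp hg'm))
    have hvA1 : ∀ y, ‖vA y‖ ≤ 1 := by
      intro y
      rw [hvAdef]; simp only [norm_mul]
      by_cases hy : y ∈ A
      · rw [Set.indicator_of_mem hy]
        simpa using sgn_abs_le (g' y)
      · rw [Set.indicator_of_notMem hy]
        simp
    have hadjA := hadj vA hvAm hvA1
    have hL : ∫ x, h x * vA x ∂μ = lam * ((∫ x in A, φ x ∂μ : ℝ) : ℂ) := by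
      have hcong : ∀ᵐ x ∂μ, h x * vA x = lam * ((Set.indicator A φ x : ℝ) : ℂ) := by
        filter_upwards [heq, hgg'] with x h1 h2
        rw [hvAdef]; simp only
        by_cases hy : x ∈ A
        · rw [Set.indicator_of_mem hy, Set.indicator_of_mem hy, one_mul, ← h1, ← h2,
            mul_assoc, sgn_mul]
        · rw [Set.indicator_of_notMem hy, Set.indicator_of_notMem hy]
          simp
      rw [integral_congr_ae hcong, integral_const_mul]
      congr 1
      rw [← integral_indicator hA]
      exact integral_ofReal
    have hR : ∫ x, f x * g x * vA (T₀ x) ∂μ =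
        lam * ((∫ x in T₀ ⁻¹' A, φ x ∂μ : ℝ) : ℂ) := by
      have hcong : ∀ᵐ x ∂μ, f x * g x * vA (T₀ x) =
          lam * ((Set.indicator (T₀ ⁻¹' A) φ x : ℝ) : ℂ) := by
        filter_upwards [hmain, hg'T] with x hx h2
        rw [hvAdef]; simp only
        by_cases hy : T₀ x ∈ A
        · rw [Set.indicator_of_mem hy, Set.indicator_of_mem (show x ∈ T₀ ⁻¹' A from hy), one_mul]
          by_cases hgx : g x = 0
          · have : φ x = 0 := by simp [hφdef, hgx]
            rw [hgx, this]
            simp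
          · have hgTne : g (T₀ x) ≠ 0 := (hx.1 hgx).2
            rw [hx.2, h2]
            exact sgn_cancel hgTne _ lam
        · rw [Set.indicator_of_notMem hy,
            Set.indicator_of_notMem (show x ∉ T₀ ⁻¹' A from hy)]
          simp
      rw [integral_congr_ae hcong, integral_const_mul]
      congr 1
      rw [← integral_indicator (hTm hA)]
      exact integral_ofReal
    rw [hL, hR] at hadjA
    exact (Complex.ofReal_inj.mp (mul_left_cancel₀ hlamne hadjA)).symm
  -- Step 4 : |g| is a.e. constant
  set φ' : α → ℝ := fun x => ‖g' x‖ with hφ'def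
  have hφ'm : Measurable φ' := continuous_norm.measurable.comp hg'm
  have hφφ' : φ =ᵐ[μ] φ' := by
    filter_upwards [hgg'] with x hx
    rw [hφdef, hφ'def]; simp only [hx]
  have hφ'int : Integrable φ' μ := hφint.congr hφφ'
  have hBiff : ∀ c : ℝ, ∀ᵐ x ∂μ, (c < φ' (T₀ x) ↔ c < φ' x) := by
    intro c
    set B := {x | c < φ' x} with hBdef
    have hB : MeasurableSet B := measurableSet_lt measurable_const hφ'm
    have hTB : MeasurableSet (T₀ ⁻¹' B) := hTm hB
    have hI : ∫ x in T₀ ⁻¹' B, φ' x ∂μ = ∫ x in B, φ' x ∂μ := by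
      have h0 := hinv B hB
      rwa [integral_congr_ae (ae_restrict_of_ae hφφ'),
        integral_congr_ae (ae_restrict_of_ae hφφ')] at h0
    have hμeq : μ (T₀ ⁻¹' B) = μ B := hT.measure_preimage hB.nullMeasurableSet
    set S₁ := T₀ ⁻¹' B \ B with hS₁def
    set S₂ := B \ T₀ ⁻¹' B with hS₂def
    have hS₁ : MeasurableSet S₁ := hTB.diff hB
    have hS₂ : MeasurableSet S₂ := hB.diff hTB
    have hμS : μ S₁ = μ S₂ := by
      have h1 : μ (T₀ ⁻¹' B ∩ B) + μ S₁ = μ (T₀ ⁻¹' B) := measure_inter_add_diff _ hB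
      have h2 : μ (B ∩ T₀ ⁻¹' B) + μ S₂ = μ B := measure_inter_add_diff _ hTB
      rw [Set.inter_comm] at h2
      rw [hμeq, ← h2] at h1
      exact (ENNReal.add_right_inj (measure_ne_top μ _)).mp h1
    have hIS : ∫ x in S₁, φ' x ∂μ = ∫ x in S₂, φ' x ∂μ := by
      have h1 := integral_inter_add_diff (μ := μ) (f := φ') (s := T₀ ⁻¹' B) hB
        hφ'int.integrableOn
      have h2 := integral_inter_add_diff (μ := μ) (f := φ') (s := B) hTB
        hφ'int.integrableOn
      rw [Set.inter_comm] at h2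
      rw [hI, ← h2] at h1
      linarith
    have hS₂0 : μ S₂ = 0 := by
      by_contra h0
      have hc1 : ∫ x in S₁, φ' x ∂μ ≤ c * (μ S₁).toReal := by
        calc ∫ x in S₁, φ' x ∂μ ≤ ∫ _x in S₁, c ∂μ :=
              setIntegral_mono_on hφ'int.integrableOn integrableOn_const hS₁
                (fun x hx => le_of_not_gt hx.2)
          _ = c * (μ S₁).toReal := by rw [setIntegral_const, smul_eq_mul, mul_comm, measureReal_def]
      have hnn : 0 ≤ᵐ[μ.restrict S₂] fun x => φ' x - c := by
        refine (ae_restrict_iff' hS₂).mpr ?_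
        filter_upwards with x hx
        have h1 : c < φ' x := hx.1
        simp only [Pi.zero_apply]
        linarith
      have hsint : Integrable (fun x => φ' x - c) (μ.restrict S₂) :=
        (hφ'int.integrableOn).sub integrableOn_const
      have hzero : ∫ x in S₂, (φ' x - c) ∂μ = 0 := by
        have hle : ∫ x in S₂, (φ' x - c) ∂μ ≤ 0 := by
          rw [integral_sub hφ'int.integrableOn
            integrableOn_const]
          rw [setIntegral_const, smul_eq_mul, measureReal_def]
          rw [← hIS, ← hμS]
          linarith
        exact le_antisymm hle (integral_nonneg_of_ae hnn)
      have hae0 := (integral_eq_zero_iff_of_nonneg_ae hnn hsint).mp hzero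
      have : ∀ᵐ x ∂μ.restrict S₂, False := by
        filter_upwards [hae0, ae_restrict_mem hS₂] with x h1 h2
        have : c < φ' x := h2.1
        have : φ' x - c = 0 := h1
        linarith
      have : μ.restrict S₂ Set.univ = 0 := by
        have h1 := ae_iff.mp this
        simpa using h1
      rw [Measure.restrict_apply_univ] at this
      exact h0 this
    have hS₁0 : μ S₁ = 0 := by rw [hμS]; exact hS₂0
    have hU : μ (S₁ ∪ S₂) = 0 := measure_union_null hS₁0 hS₂0
    rw [Filter.eventually_iff, mem_ae_iff]
    apply measure_mono_null _ hU
    intro x hx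
    simp only [Set.mem_compl_iff, Set.mem_setOf_eq] at hx
    simp only [hS₁def, hS₂def, hBdef, Set.mem_union, Set.mem_diff, Set.mem_preimage,
      Set.mem_setOf_eq]
    tauto
  have hcompφ : φ' ∘ T₀ =ᵐ[μ] φ' := by
    have hall : ∀ᵐ x ∂μ, ∀ q : ℚ, ((q : ℝ) < φ' (T₀ x) ↔ (q : ℝ) < φ' x) :=
      ae_all_iff.mpr fun q => hBiff q
    filter_upwards [hall] with x hx
    simp only [Function.comp_apply]
    by_contra hne
    rcases lt_or_gt_of_ne hne with hlt | hlt
    · obtain ⟨q, hq1, hq2⟩ := exists_rat_btwn hlt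
      exact absurd ((hx q).mpr hq2) (not_lt.mpr hq1.le)
    · obtain ⟨q, hq1, hq2⟩ := exists_rat_btwn hlt
      exact absurd ((hx q).mp hq2) (not_lt.mpr hq1.le)
  obtain ⟨c₀, hc₀⟩ := hErg.ae_eq_const_of_ae_eq_comp_ae hφ'm.aestronglyMeasurable hcompφ
  have hc₀val : c₀ = ∫ x, φ x ∂μ := by
    have h1 : ∫ x, φ' x ∂μ = c₀ := by
      rw [integral_congr_ae hc₀]
      simp [Function.const]
    rw [← h1, integral_congr_ae hφφ']
  have hc₀pos : 0 < c₀ := by rw [hc₀val]; exact hφpos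
  have hgc : ∀ᵐ x ∂μ, ‖g x‖ = c₀ := by
    filter_upwards [hφφ'.trans hc₀] with x hx
    exact hx
  have hgTc : ∀ᵐ x ∂μ, ‖g (T₀ x)‖ = c₀ := by
    have h1 : ∀ᵐ x ∂μ, φ (T₀ x) = φ' (T₀ x) := by
      have := hT.quasiMeasurePreserving.ae_eq_comp hφφ'
      filter_upwards [this] with x hx
      simpa [Function.comp] using hx
    filter_upwards [h1, hcompφ, hc₀] with x ha hb hcc
    have : φ (T₀ x) = c₀ := by
      rw [ha]
      have : φ' (T₀ x) = φ' x := hb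
      rw [this, hcc]
      rfl
    exact this
  refine ⟨hlam1, ?_, ?_⟩
  · filter_upwards [hmain, hgc] with x hx hgx
    have hgne0 : g x ≠ 0 := by
      intro h0
      rw [h0] at hgx
      simp at hgx
      exact hc₀pos.ne' hgx.symm
    exact (hx.1 hgne0).1
  · filter_upwards [hmain, hgc, hgTc] with x hx h1 h2
    rw [hx.2, h1, h2]
    have hc₀ne : ((c₀ : ℝ) : ℂ) ≠ 0 := Complex.ofReal_ne_zero.mpr hc₀pos.ne'
    field_simp
end

section
/- With T the Farey map (T(x) = x/(1-x) for x < 1/2, T(x) = 2 - 1/x for x ≥ 1/2), for every n ≥ 1 the set of nonzero elements of the n-th Farey set satisfies Fₙ* = { hₘₙ ∘ ⋯ ∘ hₘ₁ (1) : each Mᵢ ∈ {A, B} }, where h_A(x) = x/(1+x) and h_B(x) = 1/(2-x). Equivalently, Fₙ* is the set of n-th preimages of 1 under T lying in (0,1]. -/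
/-- The Farey map (with the left branch chosen at the point `1/2`, where the two branch
formulas of the disjoint-union model overlap): `T(x) = x/(1-x)` on `[0,1/2]`,
`T(x) = 2 - 1/x` on `(1/2,1]`. -/
noncomputable def fareyT (x : ℝ) : ℝ := if x ≤ 1/2 then x / (1 - x) else 2 - 1/x

/-- `h_A(x) = x/(1+x)`, inverse branch of the Farey map. -/
noncomputable def hA (x : ℝ) : ℝ := x / (1 + x)

/-- `h_B(x) = 1/(2-x)`, inverse branch of the Farey map. -/
noncomputable def hB (x : ℝ) : ℝ := 1 / (2 - x)

/-- Insert the median between each pair of consecutive elements. -/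
def fareyStep : List ℚ → List ℚ
  | x :: y :: rest => x :: mkRat (x.num + y.num) (x.den + y.den) :: fareyStep (y :: rest)
  | l => l

/-- The Farey sets `Fₙ`. -/
def fareyList : ℕ → List ℚ
  | 0 => [0, 1]
  | n + 1 => fareyStep (fareyList n)

/-- The set `{h_{Mₙ} ∘ ⋯ ∘ h_{M₁}(1) : Mᵢ ∈ {A,B}}` of points obtained from `1` by applying
`n` inverse branches. -/
noncomputable def branchSet : ℕ → Set ℝ
  | 0 => {1}
  | n + 1 => hA '' branchSet n ∪ hB '' branchSet n


def gA (q : ℚ) : ℚ := q / (1 + q)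
def gB (q : ℚ) : ℚ := 1 / (2 - q)
def med (q r : ℚ) : ℚ := mkRat (q.num + r.num) (q.den + r.den)

lemma med_eq_div (q r : ℚ) :
    med q r = ((q.num + r.num : ℤ) : ℚ) / ((q.den + r.den : ℕ) : ℚ) := by
  rw [med, Rat.mkRat_eq_divInt, Rat.divInt_eq_div]; push_cast; ring_nf

lemma num_le_den {q : ℚ} (h : q ≤ 1) : q.num ≤ (q.den : ℤ) := by
  have hd : (0:ℚ) < (q.den : ℚ) := by exact_mod_cast q.pos
  rw [← Rat.num_div_den q, div_le_one hd] at h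
  exact_mod_cast h

lemma mul_den_self (q : ℚ) : q * (q.den : ℚ) = (q.num : ℚ) := by
  have hd : ((q.den:ℚ)) ≠ 0 := by exact_mod_cast q.pos.ne'
  have := (div_eq_iff hd).1 (Rat.num_div_den q)
  linarith [this]

lemma gA_num_den {q : ℚ} (h : 0 ≤ q) :
    (gA q).num = q.num ∧ ((gA q).den : ℤ) = q.num + q.den := by
  have hn : 0 ≤ q.num := Rat.num_nonneg.2 h
  have hb : (0:ℤ) < q.num + q.den := by have := q.pos; omega
  have hcop : Nat.Coprime q.num.natAbs (q.num + q.den).natAbs := by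
    rw [Int.natAbs_add_of_nonneg hn (by positivity), Int.natAbs_natCast, add_comm]
    exact Nat.coprime_add_self_right.2 q.reduced
  have h1 : (1:ℚ) + q ≠ 0 := by positivity
  have h2 : ((q.num + q.den : ℤ) : ℚ) ≠ 0 := by exact_mod_cast hb.ne'
  have hq : gA q = ((q.num : ℚ)) / ((q.num + q.den : ℤ) : ℚ) := by
    rw [gA, div_eq_div_iff h1 h2]
    push_cast
    linear_combination mul_den_self q
  rw [hq]
  exact ⟨Rat.num_div_eq_of_coprime hb hcop, Rat.den_div_eq_of_coprime hb hcop⟩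

lemma gB_num_den {q : ℚ} (h0 : 0 ≤ q) (h1 : q ≤ 1) :
    (gB q).num = (q.den : ℤ) ∧ ((gB q).den : ℤ) = 2 * q.den - q.num := by
  have hn : 0 ≤ q.num := Rat.num_nonneg.2 h0
  have hnd : q.num ≤ (q.den : ℤ) := num_le_den h1
  have hb : (0:ℤ) < 2 * q.den - q.num := by have := q.pos; omega
  have hcop : Nat.Coprime (q.den : ℤ).natAbs (2 * q.den - q.num).natAbs := by
    rw [Int.natAbs_natCast]
    have hic : IsCoprime ((q.den : ℤ)) (2 * q.den - q.num) := by
      have h3 : IsCoprime ((q.den:ℤ)) (-q.num) :=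
        ((Nat.isCoprime_iff_coprime.2 q.reduced).symm.neg_right).of_isCoprime_of_dvd_right
          (by rw [Int.natAbs_of_nonneg hn])
      have := h3.add_mul_left_right 2
      rwa [show (2:ℤ) * q.den - q.num = -q.num + q.den * 2 by ring]
    have := Int.isCoprime_iff_gcd_eq_one.1 hic
    rwa [Int.gcd, Int.natAbs_natCast] at this
  have hq : gB q = ((q.den : ℚ)) / ((2 * q.den - q.num : ℤ) : ℚ) := by
    have hx : (2:ℚ) - q ≠ 0 := by
      have : q ≤ 1 := h1; intro hc; nlinarith
    have h2 : ((2 * q.den - q.num : ℤ) : ℚ) ≠ 0 := by exact_mod_cast hb.ne'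
    rw [gB, div_eq_div_iff hx h2]
    push_cast
    linear_combination mul_den_self q
  rw [hq]
  exact ⟨Rat.num_div_eq_of_coprime hb hcop, Rat.den_div_eq_of_coprime hb hcop⟩

lemma med_nonneg {q r : ℚ} (hq : 0 ≤ q) (hr : 0 ≤ r) : 0 ≤ med q r := by
  rw [med_eq_div]
  have h1 : (0:ℤ) ≤ q.num + r.num := by
    have := Rat.num_nonneg.2 hq; have := Rat.num_nonneg.2 hr; omega
  have h2 : (0:ℕ) < q.den + r.den := by have := q.pos; omega
  positivity

lemma med_le_one {q r : ℚ} (hq0 : 0 ≤ q) (hq1 : q ≤ 1) (hr0 : 0 ≤ r) (hr1 : r ≤ 1) :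
    med q r ≤ 1 := by
  rw [med_eq_div]
  have h2 : (0:ℚ) < ((q.den + r.den : ℕ) : ℚ) := by
    have := q.pos; have := r.pos; positivity
  rw [div_le_one h2]
  have h3 : ((q.num:ℚ)) ≤ ((q.den:ℚ)) := by exact_mod_cast num_le_den hq1
  have h4 : ((r.num:ℚ)) ≤ ((r.den:ℚ)) := by exact_mod_cast num_le_den hr1
  push_cast
  linarith

lemma gA_med {q r : ℚ} (hq : 0 ≤ q) (hr : 0 ≤ r) :
    gA (med q r) = med (gA q) (gA r) := by
  obtain ⟨hqn, hqd⟩ := gA_num_den hq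
  obtain ⟨hrn, hrd⟩ := gA_num_den hr
  have hm := med_nonneg hq hr
  have hqnn := Rat.num_nonneg.2 hq
  have hrnn := Rat.num_nonneg.2 hr
  have hqp := q.pos; have hrp := r.pos
  rw [med_eq_div (gA q) (gA r), med_eq_div q r, gA]
  have e1 : (((gA q).den + (gA r).den : ℕ) : ℚ) = ((q.num + q.den : ℤ) : ℚ) + ((r.num + r.den : ℤ) : ℚ) := by
    push_cast [← hqd, ← hrd]; ring
  have e2 : (((gA q).num + (gA r).num : ℤ) : ℚ) = ((q.num + r.num : ℤ) : ℚ) := by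
    rw [hqn, hrn]
  rw [e1, e2]
  have hden : ((q.den + r.den : ℕ) : ℚ) ≠ 0 := by positivity
  have hone : (1:ℚ) + ((q.num + r.num : ℤ) : ℚ) / ((q.den + r.den : ℕ) : ℚ) ≠ 0 := by
    have : (0:ℚ) ≤ ((q.num + r.num : ℤ) : ℚ) / ((q.den + r.den : ℕ) : ℚ) := by
      have h1 : (0:ℤ) ≤ q.num + r.num := by omega
      positivity
    intro hc; rw [← hc] at this; simp at this; linarith
  have hden2 : ((q.num + q.den : ℤ) : ℚ) + ((r.num + r.den : ℤ) : ℚ) ≠ 0 := by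
    have h1 : (0:ℤ) < (q.num + q.den) + (r.num + r.den) := by omega
    have h2 : (0:ℚ) < (((q.num + q.den) + (r.num + r.den) : ℤ) : ℚ) := by exact_mod_cast h1
    push_cast at h2 ⊢; linarith
  rw [div_eq_div_iff hone hden2]
  push_cast
  field_simp
  all_goals try ring
  all_goals exact Or.inl trivial

lemma gB_med {q r : ℚ} (hq0 : 0 ≤ q) (hq1 : q ≤ 1) (hr0 : 0 ≤ r) (hr1 : r ≤ 1) :
    gB (med q r) = med (gB q) (gB r) := by
  obtain ⟨hqn, hqd⟩ := gB_num_den hq0 hq1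
  obtain ⟨hrn, hrd⟩ := gB_num_den hr0 hr1
  have hqnn := Rat.num_nonneg.2 hq0
  have hrnn := Rat.num_nonneg.2 hr0
  have hqld := num_le_den hq1
  have hrld := num_le_den hr1
  have hqp := q.pos; have hrp := r.pos
  rw [med_eq_div (gB q) (gB r), med_eq_div q r, gB]
  have e1 : (((gB q).den + (gB r).den : ℕ) : ℚ)
      = ((2 * q.den - q.num : ℤ) : ℚ) + ((2 * r.den - r.num : ℤ) : ℚ) := by
    push_cast [← hqd, ← hrd]; ring
  have e2 : (((gB q).num + (gB r).num : ℤ) : ℚ) = ((q.den : ℚ) + (r.den : ℚ)) := by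
    rw [hqn, hrn]; push_cast; ring
  rw [e1, e2]
  have hden : ((q.den + r.den : ℕ) : ℚ) ≠ 0 := by positivity
  have htwo : (2:ℚ) - ((q.num + r.num : ℤ) : ℚ) / ((q.den + r.den : ℕ) : ℚ) ≠ 0 := by
    have hle : ((q.num + r.num : ℤ) : ℚ) / ((q.den + r.den : ℕ) : ℚ) ≤ 1 := by
      rw [div_le_one (by positivity)]
      have h3 : ((q.num:ℚ)) ≤ ((q.den:ℚ)) := by exact_mod_cast hqld
      have h4 : ((r.num:ℚ)) ≤ ((r.den:ℚ)) := by exact_mod_cast hrld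
      push_cast
      linarith
    intro hc
    have : ((q.num + r.num : ℤ) : ℚ) / ((q.den + r.den : ℕ) : ℚ) = 2 := by linarith
    linarith [hle, this]
  have hden2 : ((2 * q.den - q.num : ℤ) : ℚ) + ((2 * r.den - r.num : ℤ) : ℚ) ≠ 0 := by
    have h1 : (0:ℤ) < (2 * q.den - q.num) + (2 * r.den - r.num) := by omega
    have h2 : (0:ℚ) < (((2 * q.den - q.num) + (2 * r.den - r.num) : ℤ) : ℚ) := by exact_mod_cast h1
    push_cast at h2 ⊢; linarith
  rw [div_eq_div_iff htwo hden2]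
  push_cast
  field_simp
  all_goals try ring
  all_goals exact Or.inl trivial


lemma fareyStep_cons₂ (x y : ℚ) (r : List ℚ) :
    fareyStep (x :: y :: r) = x :: med x y :: fareyStep (y :: r) := rfl

lemma fareyStep_cons (y : ℚ) (r : List ℚ) : ∃ t, fareyStep (y :: r) = y :: t := by
  cases r with
  | nil => exact ⟨[], rfl⟩
  | cons b t => exact ⟨_, rfl⟩

lemma fareyStep_map (f : ℚ → ℚ) :
    ∀ l : List ℚ, (∀ x ∈ l, ∀ y ∈ l, f (med x y) = med (f x) (f y)) →
      fareyStep (l.map f) = (fareyStep l).map f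
  | [], _ => rfl
  | [x], _ => rfl
  | x :: y :: r, h => by
    have ih := fareyStep_map f (y :: r) (fun a ha b hb => h a (by simp [ha]) b (by simp [hb]))
    rw [List.map_cons, List.map_cons, fareyStep_cons₂, fareyStep_cons₂, ← (List.map_cons : List.map f (y :: r) = _), ih]
    simp [h x (by simp) y (by simp)]

lemma fareyStep_glue : ∀ (l₁ : List ℚ) (x : ℚ) (l₂ : List ℚ),
    fareyStep (l₁ ++ x :: l₂) = fareyStep (l₁ ++ [x]) ++ (fareyStep (x :: l₂)).tail
  | [], x, l₂ => by
    obtain ⟨t, ht⟩ := fareyStep_cons x l₂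
    simp [fareyStep, ht]
  | [a], x, l₂ => by
    obtain ⟨t, ht⟩ := fareyStep_cons x l₂
    simp only [List.cons_append, List.nil_append, fareyStep_cons₂, ht]
    rfl
  | a :: b :: t, x, l₂ => by
    have ih := fareyStep_glue (b :: t) x l₂
    simp only [List.cons_append, fareyStep_cons₂] at ih ⊢
    rw [ih]

lemma fareyStep_getLast? : ∀ l : List ℚ, (fareyStep l).getLast? = l.getLast?
  | [] => rfl
  | [x] => rfl
  | x :: y :: r => by
    obtain ⟨t, ht⟩ := fareyStep_cons y r
    rw [fareyStep_cons₂, ht, List.getLast?_cons_cons, List.getLast?_cons_cons, ← ht,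
      fareyStep_getLast? (y :: r), List.getLast?_cons_cons]

lemma mem_fareyStep : ∀ (l : List ℚ) (q : ℚ), q ∈ fareyStep l →
    q ∈ l ∨ ∃ a ∈ l, ∃ b ∈ l, q = med a b
  | [], q, h => Or.inl h
  | [x], q, h => Or.inl h
  | x :: y :: r, q, h => by
    rw [fareyStep_cons₂] at h
    rcases List.mem_cons.1 h with h1 | h1
    · exact Or.inl (by simp [h1])
    rcases List.mem_cons.1 h1 with h2 | h2
    · exact Or.inr ⟨x, by simp, y, by simp, h2⟩
    rcases mem_fareyStep (y :: r) q h2 with h3 | ⟨a, ha, b, hb, he⟩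
    · exact Or.inl (List.mem_cons_of_mem _ h3)
    · exact Or.inr ⟨a, List.mem_cons_of_mem _ ha, b, List.mem_cons_of_mem _ hb, he⟩

lemma farey_inv (n : ℕ) : (fareyList n).head? = some 0 ∧ (fareyList n).getLast? = some 1 ∧
    ∀ q ∈ fareyList n, 0 ≤ q ∧ q ≤ 1 := by
  induction n with
  | zero =>
    refine ⟨rfl, rfl, ?_⟩
    intro q hq
    rcases List.mem_cons.1 hq with h | h
    · simp [h]
    · simp at h; simp [h]
  | succ n ih =>
    obtain ⟨h0, h1, hm⟩ := ih
    refine ⟨?_, ?_, ?_⟩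
    · show (fareyStep (fareyList n)).head? = some 0
      cases hl : fareyList n with
      | nil => rw [hl] at h0; simp at h0
      | cons a t =>
        obtain ⟨t', ht'⟩ := fareyStep_cons a t
        rw [ht', List.head?_cons]
        rw [hl, List.head?_cons] at h0
        exact h0
    · show (fareyStep (fareyList n)).getLast? = some 1
      rw [fareyStep_getLast?]; exact h1
    · intro q hq
      rcases mem_fareyStep (fareyList n) q hq with h | ⟨a, ha, b, hb, he⟩
      · exact hm q h
      · obtain ⟨ha0, ha1⟩ := hm a ha
        obtain ⟨hb0, hb1⟩ := hm b hb
        exact he ▸ ⟨med_nonneg ha0 hb0, med_le_one ha0 ha1 hb0 hb1⟩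

lemma farey_decomp (n : ℕ) : ∃ m : List ℚ, fareyList n = 0 :: m ++ [1] := by
  obtain ⟨h0, h1, -⟩ := farey_inv n
  cases hl : fareyList n with
  | nil => rw [hl] at h0; simp at h0
  | cons a t =>
    rw [hl, List.head?_cons, Option.some_inj] at h0
    subst h0
    cases ht : t with
    | nil =>
      rw [hl, ht] at h1
      simp [List.getLast?] at h1
    | cons b t' =>
      have hne : t ≠ [] := by rw [ht]; simp
      refine ⟨t.dropLast, ?_⟩
      rw [hl] at h1
      have hgl : (0 :: t).getLast (by simp) = 1 := by
        rw [List.getLast?_eq_getLast_of_ne_nil (by simp : (0:ℚ) :: t ≠ [])] at h1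
        exact Option.some_inj.1 h1
      have : t.getLast hne = 1 := by
        rw [← hgl]; exact (List.getLast_cons hne).symm
      rw [← ht]
      conv_lhs => rw [← List.dropLast_append_getLast hne]
      rw [this]
      simp


lemma gA_one_eq_gB_zero : gA 1 = gB 0 := by
  rw [gA, gB]; norm_num

lemma farey_succ (n : ℕ) :
    fareyList (n+1) = (fareyList n).map gA ++ ((fareyList n).map gB).tail := by
  induction n with
  | zero =>
    rw [show fareyList 1 = fareyStep (fareyList 0) from rfl,
      show fareyList 0 = [0, 1] from rfl,
      show fareyStep [(0:ℚ), 1] = [0, med 0 1, 1] from rfl]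
    have hmed : med 0 1 = gA 1 := by
      rw [gA, med, Rat.mkRat_eq_divInt, Rat.divInt_eq_div]
      norm_num
    have h1 : gA 0 = 0 := by rw [gA]; norm_num
    have h3 : gB 1 = 1 := by rw [gB]; norm_num
    simp [hmed, h1, h3]
  | succ n ih =>
    obtain ⟨m, hm⟩ := farey_decomp n
    obtain ⟨-, -, hr⟩ := farey_inv n
    have hgA : ∀ x ∈ fareyList n, ∀ y ∈ fareyList n, gA (med x y) = med (gA x) (gA y) :=
      fun x hx y hy => gA_med (hr x hx).1 (hr y hy).1
    have hgB : ∀ x ∈ fareyList n, ∀ y ∈ fareyList n, gB (med x y) = med (gB x) (gB y) :=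
      fun x hx y hy => gB_med (hr x hx).1 (hr x hx).2 (hr y hy).1 (hr y hy).2
    have step : ∀ k, fareyList (k+1) = fareyStep (fareyList k) := fun k => rfl
    conv_lhs => rw [step (n+1), ih]
    conv_rhs => rw [step n]
    rw [hm] at hgA hgB ⊢
    have shape : ((0 :: m ++ [1]).map gA) ++ (((0 :: m ++ [1]).map gB).tail)
        = (gA 0 :: m.map gA) ++ (gA 1 :: (m ++ [1]).map gB) := by
      simp [gA_one_eq_gB_zero]
    rw [shape, fareyStep_glue]
    have e1 : (gA 0 :: m.map gA) ++ [gA 1] = (0 :: m ++ [1]).map gA := by simp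
    have e2 : gA 1 :: (m ++ [1]).map gB = (0 :: m ++ [1]).map gB := by
      simp [gA_one_eq_gB_zero]
    rw [e1, e2, fareyStep_map gA _ hgA, fareyStep_map gB _ hgB]

lemma castA (q : ℚ) : ((gA q : ℚ) : ℝ) = hA (q : ℝ) := by
  rw [gA, hA]; push_cast; ring

lemma castB (q : ℚ) : ((gB q : ℚ) : ℝ) = hB (q : ℝ) := by
  rw [gB, hB]; push_cast; ring

lemma part1 (n : ℕ) : {x : ℝ | ∃ q ∈ fareyList n, q ≠ 0 ∧ (q : ℝ) = x} = branchSet n := by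
  induction n with
  | zero =>
    ext x
    simp only [Set.mem_setOf_eq, branchSet, Set.mem_singleton_iff, fareyList]
    constructor
    · rintro ⟨q, hq, h0, rfl⟩
      rcases List.mem_cons.1 hq with h | h
      · exact absurd h h0
      · simp at h; norm_num [h]
    · rintro rfl
      exact ⟨1, by simp, one_ne_zero, by norm_num⟩
  | succ n ih =>
    obtain ⟨m, hm⟩ := farey_decomp n
    obtain ⟨-, -, hr⟩ := farey_inv n
    show _ = hA '' branchSet n ∪ hB '' branchSet n
    rw [← ih, farey_succ n]
    ext x
    simp only [Set.mem_setOf_eq, Set.mem_union, Set.mem_image]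
    constructor
    · rintro ⟨q, hq, hq0, rfl⟩
      rcases List.mem_append.1 hq with h | h
      · obtain ⟨p, hp, rfl⟩ := List.mem_map.1 h
        have hp0 : p ≠ 0 := by
          rintro rfl; exact hq0 (by rw [gA]; norm_num)
        exact Or.inl ⟨(p:ℝ), ⟨p, hp, hp0, rfl⟩, (castA p).symm⟩
      · rw [hm] at h
        rw [show (List.map gB (0 :: m ++ [1])).tail = List.map gB (m ++ [1]) from by simp] at h
        obtain ⟨p, hp, rfl⟩ := List.mem_map.1 h
        by_cases hp0 : p = 0
        · subst hp0
          refine Or.inl ⟨((1:ℚ):ℝ), ⟨1, ?_, one_ne_zero, rfl⟩, ?_⟩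
          · rw [hm]; simp
          · rw [← castA 1, gA_one_eq_gB_zero]
        · have hp' : p ∈ fareyList n := by
            rw [hm]; exact List.mem_cons_of_mem _ hp
          exact Or.inr ⟨(p:ℝ), ⟨p, hp', hp0, rfl⟩, (castB p).symm⟩
    · rintro (⟨y, ⟨p, hp, hp0, rfl⟩, rfl⟩ | ⟨y, ⟨p, hp, hp0, rfl⟩, rfl⟩)
      · refine ⟨gA p, List.mem_append.2 (Or.inl (List.mem_map.2 ⟨p, hp, rfl⟩)), ?_, castA p⟩
        have hppos : 0 < p := lt_of_le_of_ne (hr p hp).1 (Ne.symm hp0)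
        have : 0 < gA p := by
          rw [gA]; exact div_pos hppos (by linarith)
        exact this.ne'
      · have hpm : p ∈ m ++ [1] := by
          rw [hm] at hp
          rcases List.mem_cons.1 hp with h | h
          · exact absurd h hp0
          · exact h
        refine ⟨gB p, List.mem_append.2 (Or.inr ?_), ?_, castB p⟩
        · rw [hm]
          rw [show (List.map gB (0 :: m ++ [1])).tail = List.map gB (m ++ [1]) from by simp]
          exact List.mem_map.2 ⟨p, hpm, rfl⟩
        · have h1 := (hr p hp).2
          have : 0 < gB p := by
            rw [gB]; exact div_pos one_pos (by linarith)
          exact this.ne'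

lemma hA_prop {y : ℝ} (hy : y ∈ Set.Ioc (0:ℝ) 1) :
    hA y ∈ Set.Ioc (0:ℝ) 1 ∧ fareyT (hA y) = y := by
  obtain ⟨h0, h1⟩ := hy
  have hd : (0:ℝ) < 1 + y := by linarith
  have hmem : hA y ∈ Set.Ioc (0:ℝ) 1 := by
    constructor
    · exact div_pos h0 hd
    · rw [hA, div_le_one hd]; linarith
  have hle : hA y ≤ 1/2 := by
    rw [hA, div_le_iff₀ hd]; linarith
  refine ⟨hmem, ?_⟩
  rw [fareyT, if_pos hle, hA]
  have hne : (1:ℝ) - y / (1 + y) ≠ 0 := by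
    have : y / (1+y) ≤ 1/2 := hle
    intro hc; rw [sub_eq_zero] at hc; rw [← hc] at this; linarith
  field_simp
  ring

lemma hB_prop {y : ℝ} (hy : y ∈ Set.Ioc (0:ℝ) 1) :
    hB y ∈ Set.Ioc (0:ℝ) 1 ∧ fareyT (hB y) = y := by
  obtain ⟨h0, h1⟩ := hy
  have hd : (0:ℝ) < 2 - y := by linarith
  have hmem : hB y ∈ Set.Ioc (0:ℝ) 1 := by
    constructor
    · exact div_pos one_pos hd
    · rw [hB, div_le_one hd]; linarith
  have hgt : ¬ (hB y ≤ 1/2) := by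
    rw [hB, not_le, lt_div_iff₀ hd]; linarith
  refine ⟨hmem, ?_⟩
  rw [fareyT, if_neg hgt, hB, one_div_one_div]
  ring

lemma fwd {x : ℝ} (hx : x ∈ Set.Ioc (0:ℝ) 1) :
    fareyT x ∈ Set.Ioc (0:ℝ) 1 ∧ (x = hA (fareyT x) ∨ x = hB (fareyT x)) := by
  obtain ⟨h0, h1⟩ := hx
  by_cases h2 : x ≤ 1/2
  · have hd : (0:ℝ) < 1 - x := by linarith
    rw [fareyT, if_pos h2]
    constructor
    · constructor
      · exact div_pos h0 hd
      · rw [div_le_one hd]; linarith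
    · left
      rw [hA]
      have hne : (1:ℝ) + x / (1 - x) ≠ 0 := by positivity
      field_simp
      ring
  · push_neg at h2
    rw [fareyT, if_neg (not_le.2 h2)]
    have hx0 : x ≠ 0 := h0.ne'
    have hinv1 : 1/x < 2 := by
      rw [div_lt_iff₀ h0]; linarith
    have hinv2 : 1 ≤ 1/x := by
      rw [le_div_iff₀ h0]; linarith
    constructor
    · constructor
      · linarith
      · linarith
    · right
      have : (2:ℝ) - (2 - 1/x) = 1/x := by ring
      rw [hB, this, one_div_one_div]

lemma part2 (n : ℕ) : branchSet n = {x ∈ Set.Ioc (0:ℝ) 1 | fareyT^[n] x = 1} := by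
  induction n with
  | zero =>
    ext x
    simp only [branchSet, Set.mem_singleton_iff, Set.mem_setOf_eq, Function.iterate_zero_apply]
    constructor
    · rintro rfl; exact ⟨⟨one_pos, le_refl 1⟩, rfl⟩
    · rintro ⟨-, h⟩; exact h
  | succ n ih =>
    ext x
    show x ∈ hA '' branchSet n ∪ hB '' branchSet n ↔ _
    rw [ih]
    simp only [Set.mem_union, Set.mem_image, Set.mem_setOf_eq]
    constructor
    · rintro (⟨y, ⟨hy, hTy⟩, rfl⟩ | ⟨y, ⟨hy, hTy⟩, rfl⟩)
      · obtain ⟨hmem, hT⟩ := hA_prop hy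
        exact ⟨hmem, by rw [Function.iterate_succ_apply, hT, hTy]⟩
      · obtain ⟨hmem, hT⟩ := hB_prop hy
        exact ⟨hmem, by rw [Function.iterate_succ_apply, hT, hTy]⟩
    · rintro ⟨hx, hit⟩
      obtain ⟨hTmem, hcase⟩ := fwd hx
      have hTit : fareyT^[n] (fareyT x) = 1 := by
        rw [← Function.iterate_succ_apply]; exact hit
      rcases hcase with h | h
      · exact Or.inl ⟨fareyT x, ⟨hTmem, hTit⟩, h.symm⟩
      · exact Or.inr ⟨fareyT x, ⟨hTmem, hTit⟩, h.symm⟩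


/-- For `n ≥ 1`, the set `Fₙ*` of nonzero elements of the `n`-th Farey set equals the set of
points `h_{Mₙ} ∘ ⋯ ∘ h_{M₁}(1)` with `Mᵢ ∈ {A,B}`; equivalently, it is the set of `n`-th
preimages of `1` under the Farey map `T` lying in `(0,1]`. -/
theorem stmt_8 (n : ℕ) (hn : 1 ≤ n) :
    {x : ℝ | ∃ q ∈ fareyList n, q ≠ 0 ∧ (q : ℝ) = x} = branchSet n ∧
    branchSet n = {x ∈ Set.Ioc (0:ℝ) 1 | fareyT^[n] x = 1} :=
  ⟨part1 n, part2 n⟩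
end

section
/- Let T be a measure-preserving transformation of a probability space (Ω, μ) and ψ ∈ L²(μ) with ∫ψ dμ = 0. Suppose the correlations cₖ = ∫ ψ · (ψ ∘ T^k) dμ satisfy ∑_{k≥1} k·|cₖ| < ∞, and set σ² = ∫ψ² dμ + 2∑_{k≥1} cₖ. Then ‖∑_{i=0}^{n-1} ψ ∘ T^i‖²_{L²} = n σ² + O(1) as n → ∞; in particular σ² ≥ 0. -/
open MeasureTheory

private lemma stmt10_aux_sum (b : ℕ → ℝ) (B : ℝ) (n : ℕ) :
    ∑ m ∈ Finset.range n, (B - ∑ j ∈ Finset.range m, b j)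
      = n * (B - ∑ j ∈ Finset.range n, b j)
        + ∑ j ∈ Finset.range n, ((j : ℝ) + 1) * b j := by
  induction n with
  | zero => simp
  | succ n ih =>
    rw [Finset.sum_range_succ, ih, Finset.sum_range_succ, Finset.sum_range_succ]
    push_cast
    ring

private lemma stmt10_mul_integrable {Ω : Type*} [MeasurableSpace Ω] {μ : Measure Ω}
    {f g : Ω → ℝ} (hf : MemLp f 2 μ) (hg : MemLp g 2 μ) :
    Integrable (fun x => f x * g x) μ := by
  have h1 := (hf.add hg).integrable_sq
  have h2 := hf.integrable_sq
  have h3 := hg.integrable_sq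
  have : (fun x => f x * g x)
      = fun x => (((f x + g x) ^ 2 - f x ^ 2) - g x ^ 2) / 2 := by
    funext x; ring
  rw [this]
  exact ((h1.sub h2).sub h3).div_const 2

/-- For a measure-preserving `T` on a probability space and a zero-mean `ψ ∈ L²` whose
correlations `cₖ = ∫ ψ · ψ∘T^k` satisfy `∑ k |cₖ| < ∞`, with
`σ² = ∫ψ² + 2∑_{k≥1} cₖ`, the `L²` norm squared of the Birkhoff sums satisfies
`‖Sₙψ‖² = n σ² + O(1)`; in particular `σ² ≥ 0`. -/
theorem stmt_10 {Ω : Type*} [MeasurableSpace Ω] (μ : Measure Ω) [IsProbabilityMeasure μ]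
    (T : Ω → Ω) (hT : MeasurePreserving T μ μ) (ψ : Ω → ℝ)
    (hψmeas : Measurable ψ) (hψ : MemLp ψ 2 μ) (hmean : ∫ x, ψ x ∂μ = 0)
    (c : ℕ → ℝ) (hc : ∀ k, c k = ∫ x, ψ x * ψ (T^[k] x) ∂μ)
    (hsum : Summable (fun k : ℕ => ((k + 1 : ℕ) : ℝ) * |c (k + 1)|))
    (σ2 : ℝ) (hσ : σ2 = (∫ x, ψ x ^ 2 ∂μ) + 2 * ∑' k : ℕ, c (k + 1)) :
    (∃ C : ℝ, ∀ n : ℕ,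
      |(∫ x, (∑ i ∈ Finset.range n, ψ (T^[i] x)) ^ 2 ∂μ) - n * σ2| ≤ C) ∧
    0 ≤ σ2 := by
  -- basic objects
  set f : ℕ → Ω → ℝ := fun i x => ψ (T^[i] x) with hf
  have hfmeas : ∀ i, Measurable (f i) := fun i => hψmeas.comp (hT.measurable.iterate i)
  have hfmem : ∀ i, MemLp (f i) 2 μ := fun i => hψ.comp_measurePreserving (hT.iterate i)
  set S : ℕ → Ω → ℝ := fun n x => ∑ i ∈ Finset.range n, f i x with hS
  have hSmem : ∀ n, MemLp (S n) 2 μ := fun n =>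
    memLp_finset_sum (Finset.range n) (fun i _ => hfmem i)
  set a : ℕ → ℝ := fun n => ∫ x, (S n x) ^ 2 ∂μ with ha
  -- correlation
  have hcorr : ∀ k i, (∫ x, f i x * f (i + k) x ∂μ) = c k := by
    intro k i
    have hg : Measurable (fun y => ψ y * ψ (T^[k] y)) :=
      hψmeas.mul (hψmeas.comp (hT.measurable.iterate k))
    have hm : (∫ x, f i x * f (i + k) x ∂μ)
        = ∫ x, (fun y => ψ y * ψ (T^[k] y)) (T^[i] x) ∂μ := by
      apply integral_congr_ae
      filter_upwards with x
      simp only [hf, add_comm i k, Function.iterate_add_apply]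
    rw [hm]
    calc ∫ x, (fun y => ψ y * ψ (T^[k] y)) (T^[i] x) ∂μ
        = ∫ y, (fun y => ψ y * ψ (T^[k] y)) y ∂(Measure.map (T^[i]) μ) :=
          (MeasureTheory.integral_map (hT.measurable.iterate i).aemeasurable
            hg.aestronglyMeasurable).symm
      _ = ∫ y, ψ y * ψ (T^[k] y) ∂μ := by rw [(hT.iterate i).map_eq]
      _ = c k := (hc k).symm
  -- c 0 = ∫ ψ²
  have hc0 : c 0 = ∫ x, ψ x ^ 2 ∂μ := by
    rw [hc 0]
    apply integral_congr_ae
    filter_upwards with x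
    simp [sq]
  -- summability facts
  set b : ℕ → ℝ := fun k => |c (k + 1)| with hb
  have hb_nonneg : ∀ k, 0 ≤ b k := fun k => abs_nonneg _
  have hb_sum : Summable b := by
    refine Summable.of_nonneg_of_le hb_nonneg (fun k => ?_) hsum
    have h1 : (1 : ℝ) ≤ ((k + 1 : ℕ) : ℝ) := by exact_mod_cast Nat.one_le_iff_ne_zero.2 (Nat.succ_ne_zero k)
    nlinarith [abs_nonneg (c (k + 1))]
  have hcsum : Summable (fun k => c (k + 1)) := hb_sum.of_abs
  set B : ℝ := ∑' k, b k with hB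
  set K : ℝ := ∑' k : ℕ, ((k + 1 : ℕ) : ℝ) * |c (k + 1)| with hK
  have hK0 : 0 ≤ K := tsum_nonneg (fun k => by positivity)
  -- tail bound
  have htail : ∀ m : ℕ, |∑' k : ℕ, c (k + m + 1)| ≤ B - ∑ j ∈ Finset.range m, b j := by
    intro m
    have hsh : Summable (fun k => c (k + m + 1)) :=
      ((summable_nat_add_iff m).2 hcsum : Summable fun k => c (k + m + 1))
    have h1 : |∑' k : ℕ, c (k + m + 1)| ≤ ∑' k : ℕ, b (k + m) := by
      have := norm_tsum_le_tsum_norm (f := fun k => c (k + m + 1))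
        (by simpa [Real.norm_eq_abs, hb, add_assoc] using
          ((summable_nat_add_iff m).2 hb_sum : Summable fun k => b (k + m)))
      simpa [Real.norm_eq_abs, hb, add_assoc] using this
    have h2 : ∑ j ∈ Finset.range m, b j + ∑' k, b (k + m) = B :=
      Summable.sum_add_tsum_nat_add m hb_sum
    linarith
  -- key bound: sum of tails ≤ K
  have hsumtails : ∀ n : ℕ,
      ∑ m ∈ Finset.range n, (B - ∑ j ∈ Finset.range m, b j) ≤ K := by
    intro n
    rw [stmt10_aux_sum]
    have hA : ∑ j ∈ Finset.range n, ((j : ℝ) + 1) * b j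
        = ∑ j ∈ Finset.range n, ((j + 1 : ℕ) : ℝ) * |c (j + 1)| := by
      apply Finset.sum_congr rfl; intro j _; push_cast [hb]; ring
    have hpart : ∑ j ∈ Finset.range n, ((j + 1 : ℕ) : ℝ) * |c (j + 1)| ≤ K :=
      Summable.sum_le_tsum (Finset.range n) (fun j _ => by positivity) hsum
    have hnB : (n : ℝ) * (B - ∑ j ∈ Finset.range n, b j)
        ≤ K - ∑ j ∈ Finset.range n, ((j + 1 : ℕ) : ℝ) * |c (j + 1)| := by
      have hshb : Summable (fun k => b (k + n)) := (summable_nat_add_iff n).2 hb_sum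
      have hshg : Summable (fun k => ((k + n + 1 : ℕ) : ℝ) * |c (k + n + 1)|) := by
        have := (summable_nat_add_iff (f := fun k : ℕ => ((k + 1 : ℕ) : ℝ) * |c (k + 1)|) n).2 hsum
        simpa [add_assoc, add_comm, add_left_comm] using this
      have hBn : B - ∑ j ∈ Finset.range n, b j = ∑' k, b (k + n) := by
        have := Summable.sum_add_tsum_nat_add n hb_sum
        linarith
      have hKn : ∑ j ∈ Finset.range n, ((j + 1 : ℕ) : ℝ) * |c (j + 1)|
          + ∑' k, ((k + n + 1 : ℕ) : ℝ) * |c (k + n + 1)| = K := by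
        have := Summable.sum_add_tsum_nat_add (f := fun k : ℕ => ((k + 1 : ℕ) : ℝ) * |c (k + 1)|) n hsum
        simpa [hK, add_assoc, add_comm, add_left_comm] using this
      have hle : ∑' k, (n : ℝ) * b (k + n) ≤ ∑' k, ((k + n + 1 : ℕ) : ℝ) * |c (k + n + 1)| := by
        refine Summable.tsum_le_tsum (fun k => ?_) (hshb.mul_left _) hshg
        have h1 : ((n : ℝ)) ≤ ((k + n + 1 : ℕ) : ℝ) := by push_cast; linarith [Nat.cast_nonneg (α := ℝ) k]
        have h2 : b (k + n) = |c (k + n + 1)| := by simp [hb, add_assoc]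
        rw [h2]
        exact mul_le_mul_of_nonneg_right h1 (abs_nonneg _)
      rw [hBn, ← tsum_mul_left]
      linarith
    rw [hA]; linarith
  -- recurrence
  have hrec : ∀ n : ℕ, a (n + 1) = a n + c 0 + 2 * ∑ j ∈ Finset.range n, c (j + 1) := by
    intro n
    have hint : ∀ i j, Integrable (fun x => f i x * f j x) μ :=
      fun i j => stmt10_mul_integrable (hfmem i) (hfmem j)
    have hintSS : Integrable (fun x => S n x * S n x) μ :=
      stmt10_mul_integrable (hSmem n) (hSmem n)
    have hintSf : Integrable (fun x => S n x * f n x) μ :=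
      stmt10_mul_integrable (hSmem n) (hfmem n)
    have hintff := hint n n
    have hexp : a (n + 1)
        = ∫ x, (S n x * S n x + (2 * (S n x * f n x) + f n x * f n x)) ∂μ := by
      apply integral_congr_ae
      filter_upwards with x
      simp only [ha, hS, Finset.sum_range_succ]
      ring
    have hSS : (∫ x, S n x * S n x ∂μ) = a n := by
      apply integral_congr_ae
      filter_upwards with x
      rw [sq]
    have hff : (∫ x, f n x * f n x ∂μ) = c 0 := by
      have := hcorr 0 n
      simpa using this
    have hSf : (∫ x, S n x * f n x ∂μ) = ∑ j ∈ Finset.range n, c (j + 1) := by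
      have h1 : (∫ x, S n x * f n x ∂μ)
          = ∑ i ∈ Finset.range n, ∫ x, f i x * f n x ∂μ := by
        rw [← integral_finset_sum (Finset.range n) (fun i _ => hint i n)]
        apply integral_congr_ae
        filter_upwards with x
        simp only [hS]
        rw [Finset.sum_mul]
      have h2 : ∀ i ∈ Finset.range n, (∫ x, f i x * f n x ∂μ) = c (n - i) := by
        intro i hi
        have hi' : i ≤ n := le_of_lt (Finset.mem_range.1 hi)
        have := hcorr (n - i) i
        rwa [Nat.add_sub_cancel' hi'] at this
      rw [h1, Finset.sum_congr rfl h2]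
      have h3 := Finset.sum_range_reflect (fun j => c (j + 1)) n
      rw [← h3]
      apply Finset.sum_congr rfl
      intro i hi
      have : n - 1 - i + 1 = n - i := by
        have := Finset.mem_range.1 hi
        omega
      rw [this]
    have h5 : Integrable (fun x => 2 * (S n x * f n x)) μ := hintSf.const_mul 2
    have h4 : Integrable (fun x => 2 * (S n x * f n x) + f n x * f n x) μ :=
      h5.add hintff
    rw [hexp, integral_add hintSS h4, integral_add h5 hintff, integral_const_mul,
      hSS, hff, hSf]
    ring
  have ha0 : a 0 = 0 := by simp [ha, hS]
  -- σ² in terms of c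
  have hσ' : σ2 = c 0 + 2 * ∑' k : ℕ, c (k + 1) := by rw [hσ, hc0]
  -- step bound
  have hstep : ∀ m : ℕ, |a (m + 1) - a m - σ2| ≤ 2 * (B - ∑ j ∈ Finset.range m, b j) := by
    intro m
    have h2 : ∑ j ∈ Finset.range m, c (j + 1) + ∑' k, c (k + m + 1)
        = ∑' k, c (k + 1) := by
      have := Summable.sum_add_tsum_nat_add (f := fun k => c (k + 1)) m hcsum
      simpa [add_assoc, add_comm, add_left_comm] using this
    have := htail m
    rw [hrec m, hσ']
    have heq : a m + c 0 + 2 * ∑ j ∈ Finset.range m, c (j + 1) - a m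
        - (c 0 + 2 * ∑' k : ℕ, c (k + 1)) = -(2 * ∑' k, c (k + m + 1)) := by
      rw [← h2]; ring
    rw [heq, abs_neg, abs_mul, abs_two]
    linarith
  -- telescoping
  have htel : ∀ n : ℕ, a n - n * σ2 = ∑ m ∈ Finset.range n, (a (m + 1) - a m - σ2) := by
    intro n
    induction n with
    | zero => simp [ha0]
    | succ n ih => rw [Finset.sum_range_succ, ← ih]; push_cast; ring
  have hmain : ∀ n : ℕ, |a n - n * σ2| ≤ 2 * K := by
    intro n
    rw [htel n]
    calc |∑ m ∈ Finset.range n, (a (m + 1) - a m - σ2)|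
        ≤ ∑ m ∈ Finset.range n, |a (m + 1) - a m - σ2| := Finset.abs_sum_le_sum_abs _ _
      _ ≤ ∑ m ∈ Finset.range n, 2 * (B - ∑ j ∈ Finset.range m, b j) :=
          Finset.sum_le_sum (fun m _ => hstep m)
      _ = 2 * ∑ m ∈ Finset.range n, (B - ∑ j ∈ Finset.range m, b j) := by
          rw [Finset.mul_sum]
      _ ≤ 2 * K := by linarith [hsumtails n]
  -- conclusion
  have hanonneg : ∀ n, 0 ≤ a n := fun n => integral_nonneg (fun x => sq_nonneg _)
  constructor
  · exact ⟨2 * K, hmain⟩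
  · by_contra hneg
    push_neg at hneg
    obtain ⟨n, hn⟩ := exists_nat_gt ((2 * K) / (-σ2))
    have hσpos : 0 < -σ2 := by linarith
    have h1 : (2 * K) < n * (-σ2) := (div_lt_iff₀ hσpos).1 hn
    have h2 := hmain n
    have h3 := hanonneg n
    have := abs_le.1 h2
    nlinarith
end
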